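/- Let p¹ = (1,0,0), p² = (1,1,0), p³ = (2,1,2), p⁴ = (4,−2,−2). Then for any φ ∈ SO(3) and any permutation σ of {1,2,3,4} satisfying π_z φ p⁽ⁱ⁾ = π_z p⁽σ(i)⁾ for all i, the permutation σ must be the identity. Consequently (since the points are affinely independent), φ = id. -/

import Mathlib

set_option maxHeartbeats 1000000

/-- For the specific tetrahedron p¹ = (1,0,0), p² = (1,1,0), p³ = (2,1,2),
p⁴ = (4,−2,−2), any rotation φ ∈ SO(3) and permutation σ with π_z φ p⁽ⁱ⁾ = π_z p⁽σ(i)⁾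
must satisfy σ = id and φ = id. -/
theorem stmt16 :
    let p : Fin 4 → (Fin 3 → ℝ) :=
      ![![1, 0, 0], ![1, 1, 0], ![2, 1, 2], ![4, -2, -2]]
    let πz : (Fin 3 → ℝ) → (Fin 2 → ℝ) := fun x => ![x 0, x 1]
    ∀ (φ : Matrix (Fin 3) (Fin 3) ℝ), φ.transpose * φ = 1 → φ.det = 1 →
      ∀ σ : Equiv.Perm (Fin 4),
        (∀ i : Fin 4, πz (φ.mulVec (p i)) = πz (p (σ i))) →
        σ = 1 ∧ φ = 1 := by
  intro p πz φ hO hdet σ hσ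
  have key : ∀ k l : Fin 3,
      φ 0 k * φ 0 l + φ 1 k * φ 1 l + φ 2 k * φ 2 l = if k = l then 1 else 0 := by
    intro k l
    have := congrFun (congrFun hO k) l
    simpa [Matrix.mul_apply, Fin.sum_univ_three, Matrix.transpose_apply,
      Matrix.one_apply] using this
  have c00 := key 0 0; have c11 := key 1 1; have c22 := key 2 2
  have c01 := key 0 1; have c02 := key 0 2; have c12 := key 1 2
  norm_num [Fin.ext_iff] at c00 c11 c22 c01 c02 c12
  have h0 : σ 0 = 0 := by
    obtain ⟨j, hj⟩ : ∃ j, σ 0 = j := ⟨_, rfl⟩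
    have E := hσ 0; rw [hj] at E
    have A := congrFun E 0; have B := congrFun E 1
    fin_cases j
    · exact hj
    all_goals exfalso
    all_goals simp only [p, πz, Matrix.mulVec, dotProduct, Fin.sum_univ_three, Matrix.cons_val_zero, Matrix.cons_val_one, Matrix.cons_val_two, Matrix.head_cons, Matrix.tail_cons] at A B; norm_num at A B
    all_goals nlinarith [sq_nonneg (φ 2 0), c00, A, B]
  have h1 : σ 1 = 1 := by
    obtain ⟨j, hj⟩ : ∃ j, σ 1 = j := ⟨_, rfl⟩
    have E := hσ 1; rw [hj] at E
    have A := congrFun E 0; have B := congrFun E 1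
    fin_cases j
    · exact absurd (σ.injective (hj.trans h0.symm)) (by decide)
    · exact hj
    all_goals exfalso
    all_goals simp only [p, πz, Matrix.mulVec, dotProduct, Fin.sum_univ_three, Matrix.cons_val_zero, Matrix.cons_val_one, Matrix.cons_val_two, Matrix.head_cons, Matrix.tail_cons] at A B; norm_num at A B
    all_goals nlinarith [sq_nonneg (φ 2 0 + φ 2 1), c00, c11, c01, A, B]
  have h2 : σ 2 = 2 := by
    obtain ⟨j, hj⟩ : ∃ j, σ 2 = j := ⟨_, rfl⟩
    have E := hσ 2; rw [hj] at E
    have A := congrFun E 0; have B := congrFun E 1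
    fin_cases j
    · exact absurd (σ.injective (hj.trans h0.symm)) (by decide)
    · exact absurd (σ.injective (hj.trans h1.symm)) (by decide)
    · exact hj
    · exfalso
      simp only [p, πz, Matrix.mulVec, dotProduct, Fin.sum_univ_three, Matrix.cons_val_zero, Matrix.cons_val_one, Matrix.cons_val_two, Matrix.head_cons, Matrix.tail_cons] at A B; norm_num at A B
      nlinarith [sq_nonneg (2 * φ 2 0 + φ 2 1 + 2 * φ 2 2),
        c00, c11, c22, c01, c02, c12, A, B]
  have h3 : σ 3 = 3 := by
    obtain ⟨j, hj⟩ : ∃ j, σ 3 = j := ⟨_, rfl⟩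
    fin_cases j
    · exact absurd (σ.injective (hj.trans h0.symm)) (by decide)
    · exact absurd (σ.injective (hj.trans h1.symm)) (by decide)
    · exact absurd (σ.injective (hj.trans h2.symm)) (by decide)
    · exact hj
  have hσid : σ = 1 := by
    apply Equiv.ext; intro i
    fin_cases i <;> simpa
  refine ⟨hσid, ?_⟩
  have E0 := hσ 0; rw [h0] at E0
  have E1 := hσ 1; rw [h1] at E1
  have E2 := hσ 2; rw [h2] at E2
  have A0 := congrFun E0 0; have B0 := congrFun E0 1
  have A1 := congrFun E1 0; have B1 := congrFun E1 1
  have A2 := congrFun E2 0; have B2 := congrFun E2 1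
  simp only [p, πz, Matrix.mulVec, dotProduct, Fin.sum_univ_three, Matrix.cons_val_zero, Matrix.cons_val_one, Matrix.cons_val_two, Matrix.head_cons, Matrix.tail_cons]
    at A0 B0 A1 B1 A2 B2
  norm_num at A0 B0 A1 B1 A2 B2
  have h00 : φ 0 0 = 1 := by linarith
  have h10 : φ 1 0 = 0 := by linarith
  have h01 : φ 0 1 = 0 := by linarith
  have h11 : φ 1 1 = 1 := by linarith
  have h02 : φ 0 2 = 0 := by linarith
  have h12 : φ 1 2 = 0 := by linarith
  have h20 : φ 2 0 = 0 := by
    have : φ 2 0 * φ 2 0 = 0 := by nlinarith [c00, h00, h10]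
    exact mul_self_eq_zero.mp this
  have h21 : φ 2 1 = 0 := by
    have : φ 2 1 * φ 2 1 = 0 := by nlinarith [c11, h01, h11]
    exact mul_self_eq_zero.mp this
  have h22 : φ 2 2 = 1 := by
    rw [Matrix.det_fin_three] at hdet
    rw [h00, h10, h01, h11, h02, h12, h20, h21] at hdet
    linear_combination hdet
  ext i j
  fin_cases i <;> fin_cases j <;>
    simp only [Matrix.one_apply, Fin.mk_zero, Fin.mk_one] <;>
    norm_num <;> assumption
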